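/- Let g : E → ℤ/4ℤ be an H-form on a finite-dimensional ℤ/2-vector space E with associated bilinear form C. Let a ∈ E with g(a) = 2, and let T ∈ O(E,g). Then rank(T ∘ T_a − Id) = rank(T − Id) + 1 or rank(T ∘ T_a − Id) = rank(T − Id) − 1; equivalently, writing F(S) = ker(S − Id) for the fixed subspace of a linear map S, codim F(T ∘ T_a) = codim F(T) ± 1. -/

import Mathlib

/-- The transvection `T_a : x ↦ x + C(x,a)·a`, as an endomorphism. -/
def TmapEnd {E : Type*} [AddCommGroup E] [Module (ZMod 2) E]
    (C : E →ₗ[ZMod 2] E →ₗ[ZMod 2] ZMod 2) (a : E) : Module.End (ZMod 2) E :=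
  LinearMap.id + (C.flip a).smulRight a

section Aux

variable {E : Type*} [AddCommGroup E] [Module (ZMod 2) E]

lemma char2E (x : E) : x + x = 0 := by
  have h : (2 : ZMod 2) • x = x + x := two_smul _ x
  have h2 : (2 : ZMod 2) = 0 := by decide
  rw [h2, zero_smul] at h
  exact h.symm

lemma zmod2_cancel : ∀ u v : ZMod 2,
    2 * ((u.val : ℕ) : ZMod 4) = 2 * ((v.val : ℕ) : ZMod 4) → u = v := by decide

lemma zmod2_wall : ∀ u : ZMod 2,
    (2 : ZMod 4) + 2 * ((u.val : ℕ) : ZMod 4) = 0 → u = 1 := by decide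

lemma zmod2_ne_zero : ∀ u : ZMod 2, u ≠ 0 → u = 1 := by decide
lemma zmod2_ne_one : ∀ u : ZMod 2, u ≠ 1 → u = 0 := by decide
lemma zmod2_cases : ∀ u : ZMod 2, u = 0 ∨ u = 1 := by decide
lemma zmod2_caa : ∀ u : ZMod 2,
    (0 : ZMod 4) = 2 + 2 + 2 * ((u.val : ℕ) : ZMod 4) → u = 0 := by decide

variable (C : E →ₗ[ZMod 2] E →ₗ[ZMod 2] ZMod 2) (g : E → ZMod 4)

section g

variable (hadd : ∀ x y : E, g (x + y) = g x + g y + 2 * ((C x y).val : ZMod 4))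

include hadd

lemma g_zero : g 0 = 0 := by
  have h : g 0 = g 0 + g 0 := by simpa using hadd 0 0
  exact (left_eq_add.mp h).symm ▸ rfl

lemma orth (T : Module.End (ZMod 2) E) (hT : ∀ x : E, g (T x) = g x) (x y : E) :
    C (T x) (T y) = C x y := by
  apply zmod2_cancel
  have h1 := hadd (T x) (T y)
  rw [← map_add, hT, hT, hT, hadd x y] at h1
  exact (add_left_cancel h1).symm

lemma wall (T : Module.End (ZMod 2) E) (hT : ∀ x : E, g (T x) = g x)
    {z v : E} (hz : T z = z + v) (hv : g v = 2) : C z v = 1 := by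
  apply zmod2_wall
  have h1 := hT z
  rw [hz, hadd z v] at h1
  rw [add_assoc] at h1
  have h2 : g v + 2 * ((C z v).val : ZMod 4) = 0 := add_eq_left.mp h1
  rw [hv] at h2
  exact h2

lemma Caa {a : E} (ha : g a = 2) : C a a = 0 := by
  have h := hadd a a
  rw [char2E, g_zero C g hadd, ha] at h
  exact zmod2_caa _ h

lemma Tsurj [FiniteDimensional (ZMod 2) E] (hnd : ∀ x : E, (∀ y : E, C x y = 0) → x = 0)
    (T : Module.End (ZMod 2) E) (hT : ∀ x : E, g (T x) = g x) :
    Function.Surjective T := by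
  rw [← LinearMap.injective_iff_surjective]
  intro x y hxy
  have h : ∀ z : E, C (x - y) z = 0 := by
    intro z
    have h1 : C (T x) (T z) = C x z := orth C g hadd T hT x z
    have h2 : C (T y) (T z) = C y z := orth C g hadd T hT y z
    rw [hxy] at h1
    rw [map_sub, LinearMap.sub_apply, ← h1, ← h2, sub_self]
  have := hnd _ h
  exact sub_eq_zero.mp this

/-- Key dichotomy: either `a ∈ im (T-1)` or there is a fixed vector not orthogonal to `a`. -/
lemma key [FiniteDimensional (ZMod 2) E] (hnd : ∀ x : E, (∀ y : E, C x y = 0) → x = 0)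
    (a : E) (T : Module.End (ZMod 2) E) (hT : ∀ x : E, g (T x) = g x) :
    (∃ x, T x = x + a) ∨ (∃ x, T x = x ∧ C x a = 1) := by
  by_contra hcon
  push_neg at hcon
  obtain ⟨h1, h2⟩ := hcon
  -- a is not in the range of T - 1
  set p : Submodule (ZMod 2) E := LinearMap.range (T - 1) with hp
  have hap : a ∉ p := by
    intro hmem
    obtain ⟨x, hx⟩ := hmem
    apply h1 x
    have : T x - x = a := hx
    rw [sub_eq_iff_eq_add'] at this
    rw [this, add_comm]
  -- find a separating functional
  have hπa : p.mkQ a ≠ 0 := by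
    simpa [Submodule.mkQ_apply, Submodule.Quotient.mk_eq_zero] using hap
  have hdual : ∃ f : Module.Dual (ZMod 2) (E ⧸ p), f (p.mkQ a) ≠ 0 := by
    by_contra hf
    push_neg at hf
    exact hπa ((Module.forall_dual_apply_eq_zero_iff (ZMod 2) _).mp hf)
  obtain ⟨f, hfa⟩ := hdual
  set φ : Module.Dual (ZMod 2) E := f.comp (p.mkQ) with hφ
  have hφa : φ a ≠ 0 := hfa
  have hφp : ∀ x : E, φ ((T - 1) x) = 0 := by
    intro x
    have : (T - 1) x ∈ p := ⟨x, rfl⟩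
    simp only [hφ, LinearMap.comp_apply, Submodule.mkQ_apply]
    rw [(Submodule.Quotient.mk_eq_zero p).mpr this, map_zero]
  -- represent φ by a vector b
  have hC : LinearMap.BilinForm.Nondegenerate C :=
    LinearMap.BilinForm.Nondegenerate.ofSeparatingLeft hnd
  set b : E := (LinearMap.BilinForm.toDual C hC).symm φ with hb
  have hbC : ∀ y : E, C b y = φ y := fun y =>
    LinearMap.BilinForm.apply_toDual_symm_apply (B := C) (hB := hC) φ y
  -- b is fixed by T
  have hTb : T b = b := by
    have hz : ∀ u : E, C (T b - b) u = 0 := by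
      intro u
      obtain ⟨y, rfl⟩ := Tsurj C g hadd hnd T hT u
      have h1 : C (T b) (T y) = C b y := orth C g hadd T hT b y
      rw [map_sub, LinearMap.sub_apply, h1]
      have h4 : C b ((T - 1) y) = 0 := by rw [hbC]; exact hφp y
      rw [LinearMap.sub_apply, Module.End.one_apply, map_sub] at h4
      have h3 : C b (T y) = C b y := sub_eq_zero.mp h4
      rw [h3, sub_self]
    have := hnd _ hz
    exact sub_eq_zero.mp this
  have hba : C b a = 1 := zmod2_ne_zero _ (by rw [hbC]; exact hφa)
  exact h2 b hTb hba

end g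

lemma TmapEnd_apply (a x : E) : TmapEnd C a x = x + C x a • a := by
  simp [TmapEnd, LinearMap.smulRight_apply]

lemma finrank_inf_ker [FiniteDimensional (ZMod 2) E]
    (K : Submodule (ZMod 2) E) (f : E →ₗ[ZMod 2] ZMod 2)
    {x : E} (hx : x ∈ K) (hfx : f x ≠ 0) :
    Module.finrank (ZMod 2) K
      = Module.finrank (ZMod 2) ↥(K ⊓ LinearMap.ker f) + 1 := by
  set fr : K →ₗ[ZMod 2] ZMod 2 := f.comp K.subtype with hfr
  have hsurj : Function.Surjective fr := by
    intro c
    refine ⟨c • ⟨x, hx⟩, ?_⟩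
    have h1 : f x = 1 := zmod2_ne_zero _ hfx
    simp only [hfr, LinearMap.comp_apply, map_smul, Submodule.coe_subtype,
      Submodule.coe_smul, SetLike.mk_smul_mk]
    rw [h1, smul_eq_mul, mul_one]
  have h1 : Module.finrank (ZMod 2) (LinearMap.range fr)
      + Module.finrank (ZMod 2) (LinearMap.ker fr)
      = Module.finrank (ZMod 2) K := LinearMap.finrank_range_add_finrank_ker fr
  have h2 : LinearMap.range fr = ⊤ := LinearMap.range_eq_top.mpr hsurj
  have h3 : Module.finrank (ZMod 2) (LinearMap.range fr) = 1 := by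
    rw [h2, finrank_top]
    exact Module.finrank_self _
  have h4 : LinearMap.ker fr = Submodule.comap K.subtype (LinearMap.ker f) :=
    LinearMap.ker_comp _ _
  have h5 : Module.finrank (ZMod 2) (LinearMap.ker fr)
      = Module.finrank (ZMod 2) ↥(K ⊓ LinearMap.ker f) := by
    rw [h4, ← Submodule.map_comap_subtype K (LinearMap.ker f),
      Submodule.finrank_map_subtype_eq]
  omega

end Aux


section g2

variable {E : Type*} [AddCommGroup E] [Module (ZMod 2) E]
variable (C : E →ₗ[ZMod 2] E →ₗ[ZMod 2] ZMod 2) (g : E → ZMod 4)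
variable (hadd : ∀ x y : E, g (x + y) = g x + g y + 2 * ((C x y).val : ZMod 4))
include hadd

/-- No `S ∈ O(g)` can both move some `x` by `a` and fix some `y` with `C y a = 1`. -/
lemma noPP' {a : E} (ha : g a = 2) (S : Module.End (ZMod 2) E)
    (hS : ∀ x : E, g (S x) = g x) (x y : E)
    (hx : S x = x + a) (hy : S y = y) (hya : C y a = 1) : False := by
  have hx1 : C x a = 1 := wall C g hadd S hS hx ha
  have hz : S (x + y) = (x + y) + a := by
    rw [map_add, hx, hy]; abel
  have hz1 : C (x + y) a = 1 := wall C g hadd S hS hz ha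
  have hz0 : C (x + y) a = 0 := by
    rw [map_add, LinearMap.add_apply, hx1, hya]; decide
  rw [hz1] at hz0
  exact one_ne_zero hz0

end g2

/-- composing `T ∈ O(E,g)` with a transvection `T_a`, `g(a) = 2`,
changes `rank(T - Id)` by exactly one. -/
theorem rank_comp_Tmap_sub_id
    {E : Type*} [AddCommGroup E] [Module (ZMod 2) E] [FiniteDimensional (ZMod 2) E]
    (C : E →ₗ[ZMod 2] E →ₗ[ZMod 2] ZMod 2) (g : E → ZMod 4)
    (hsymm : ∀ x y : E, C x y = C y x)
    (hnd : ∀ x : E, (∀ y : E, C x y = 0) → x = 0)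
    (hadd : ∀ x y : E, g (x + y) = g x + g y + 2 * ((C x y).val : ZMod 4))
    (hodd : ∃ x : E, g x = 1 ∨ g x = 3)
    (a : E) (ha : g a = 2)
    (T : Module.End (ZMod 2) E) (hT : ∀ x : E, g (T x) = g x) :
    Module.finrank (ZMod 2) (LinearMap.range (T * TmapEnd C a - 1)) =
      Module.finrank (ZMod 2) (LinearMap.range (T - 1)) + 1 ∨
    Module.finrank (ZMod 2) (LinearMap.range (T - 1)) =
      Module.finrank (ZMod 2) (LinearMap.range (T * TmapEnd C a - 1)) + 1 := by
  classical
  set Ta := TmapEnd C a with hTadef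
  set T' := T * Ta with hT'def
  have hCaa : C a a = 0 := Caa C g hadd ha
  have hTax : ∀ x : E, Ta x = x + C x a • a := TmapEnd_apply C a
  have htwo : (2 : ZMod 4) + 2 * (((1 : ZMod 2)).val : ZMod 4) = 0 := by decide
  have hgTa : ∀ x : E, g (Ta x) = g x := by
    intro x
    rw [hTax x]
    rcases zmod2_cases (C x a) with h | h
    · rw [h, zero_smul, add_zero]
    · rw [h, one_smul, hadd x a, ha, h, add_assoc, htwo, add_zero]
  have hT'app : ∀ x : E, T' x = T (Ta x) := fun x => rfl
  have hT' : ∀ x : E, g (T' x) = g x := by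
    intro x; rw [hT'app, hT, hgTa]
  -- on the hyperplane `C · a = 0`, `T'` agrees with `T`
  have hagree : ∀ z : E, C z a = 0 → T' z = T z := by
    intro z h
    rw [hT'app, hTax, h, zero_smul, add_zero]
  -- kernels
  set KR := LinearMap.ker (T - 1) with hKR
  set KS := LinearMap.ker (T' - 1) with hKS
  set H := LinearMap.ker (C.flip a) with hH
  have hmemKR : ∀ z : E, z ∈ KR ↔ T z = z := by
    intro z
    rw [hKR, LinearMap.mem_ker, LinearMap.sub_apply, Module.End.one_apply, sub_eq_zero]
  have hmemKS : ∀ z : E, z ∈ KS ↔ T' z = z := by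
    intro z
    rw [hKS, LinearMap.mem_ker, LinearMap.sub_apply, Module.End.one_apply, sub_eq_zero]
  have hmemH : ∀ z : E, z ∈ H ↔ C z a = 0 := by
    intro z
    rw [hH, LinearMap.mem_ker, LinearMap.flip_apply]
  have hW : KS ⊓ H = KR ⊓ H := by
    ext z
    simp only [Submodule.mem_inf, hmemKS, hmemKR, hmemH]
    constructor
    · rintro ⟨h1, h2⟩
      exact ⟨by rw [← hagree z h2]; exact h1, h2⟩
    · rintro ⟨h1, h2⟩
      exact ⟨by rw [hagree z h2]; exact h1, h2⟩
  have hRNR : Module.finrank (ZMod 2) (LinearMap.range (T - 1))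
      + Module.finrank (ZMod 2) KR = Module.finrank (ZMod 2) E :=
    LinearMap.finrank_range_add_finrank_ker _
  have hRNS : Module.finrank (ZMod 2) (LinearMap.range (T' - 1))
      + Module.finrank (ZMod 2) KS = Module.finrank (ZMod 2) E :=
    LinearMap.finrank_range_add_finrank_ker _
  -- the two dichotomies
  rcases key C g hadd hnd a T hT with ⟨x, hx⟩ | ⟨x, hx, hxa⟩ <;>
    rcases key C g hadd hnd a T' hT' with ⟨y, hy⟩ | ⟨y, hy, hya⟩
  · -- both `a ∈ im (T-1)` and `a ∈ im (T'-1)`: impossible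
    exfalso
    rcases zmod2_cases (C y a) with h | h
    · -- then `T y = y + a`, but `wall` forces `C y a = 1`
      have hTy : T y = y + a := by
        rw [← hagree y h]; exact hy
      have := wall C g hadd T hT hTy ha
      rw [h] at this; exact zero_ne_one this
    · -- then `y + a` is a fixed point of `T` with `C (y+a) a = 1`
      have hTw : T (y + a) = y + a := by
        have := hy
        rw [hT'app, hTax, h, one_smul] at this
        exact this
      have hwa : C (y + a) a = 1 := by
        rw [map_add, LinearMap.add_apply, h, hCaa, add_zero]
      exact noPP' C g hadd ha T hT x (y + a) hx hTw hwa
  · -- `a ∈ im (T-1)` and a fixed point of `T'` off the hyperplane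
    right
    have hQ : y ∈ KS := (hmemKS y).mpr hy
    have hfy : (C.flip a) y ≠ 0 := by
      rw [LinearMap.flip_apply, hya]; exact one_ne_zero
    have hdim : Module.finrank (ZMod 2) KS
        = Module.finrank (ZMod 2) ↥(KS ⊓ H) + 1 :=
      finrank_inf_ker KS (C.flip a) hQ hfy
    have hle : KR ≤ H := by
      intro z hz
      rw [hmemH]
      refine zmod2_ne_one _ (fun h1 => ?_)
      exact noPP' C g hadd ha T hT x z hx ((hmemKR z).mp hz) h1
    rw [hW, inf_eq_left.mpr hle] at hdim
    omega
  · -- a fixed point of `T` off the hyperplane and `a ∈ im (T'-1)`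
    left
    have hP : x ∈ KR := (hmemKR x).mpr hx
    have hfx : (C.flip a) x ≠ 0 := by
      rw [LinearMap.flip_apply, hxa]; exact one_ne_zero
    have hdim : Module.finrank (ZMod 2) KR
        = Module.finrank (ZMod 2) ↥(KR ⊓ H) + 1 :=
      finrank_inf_ker KR (C.flip a) hP hfx
    have hle : KS ≤ H := by
      intro z hz
      rw [hmemH]
      refine zmod2_ne_one _ (fun h1 => ?_)
      exact noPP' C g hadd ha T' hT' y z hy ((hmemKS z).mp hz) h1
    rw [← hW, inf_eq_left.mpr hle] at hdim
    omega
  · -- fixed points of both `T` and `T'` off the hyperplane: impossible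
    exfalso
    have hTw : T (y + a) = (y + a) + a := by
      have h1 : T (y + a) = y := by
        have := hy
        rw [hT'app, hTax, hya, one_smul] at this
        exact this
      rw [h1, add_assoc, char2E, add_zero]
    exact noPP' C g hadd ha T hT (y + a) x hTw hx hxa
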